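/- arXiv:math/9912098 — 2 statements merged into one kernel-verified Lean document; each statement's English description precedes it below -/
import Mathlib

section
/- Let Λ be a set equipped with two partial orders ⪯ and ⊑ (write λ ≺ λ' for λ ⪯ λ' with λ ≠ λ'). Let Γ be a finite subset of Λ, let ν be a nonnegative measure (weight function) on Γ, and let A : Λ → (0,∞). Assume that for each γ ∈ Γ and each N > 0 the set {λ ∈ Λ : A(λ) ≤ N and γ ⊑ λ} is finite. Then there exist a subset ℬ ⊆ Λ and a map q : Γ → Λ such that: (1) γ ⊑ q(γ) for all γ ∈ Γ; (2) if q(γ) ∉ ℬ then q(γ) = γ; (3) ∑_{λ∈ℬ} A(λ) ≤ ν(Γ); (4) for every λ ∈ Λ, ν({γ ∈ Γ : q(γ) ≺ λ and γ ⊑ λ}) < A(λ). -/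
open scoped ENNReal Classical

noncomputable section

lemma exists_max_rel {α : Type*} (r : α → α → Prop)
    (htr : ∀ {a b c}, r a b → r b c → r a c)
    (has : ∀ {a b}, r a b → r b a → a = b) :
    ∀ (s : Finset α), s.Nonempty → ∃ a ∈ s, ∀ b ∈ s, r a b → a = b := by
  intro s
  induction s using Finset.induction_on with
  | empty => rintro ⟨x, hx⟩; simp at hx
  | @insert x s hx ih =>
    intro _
    rcases s.eq_empty_or_nonempty with rfl | hs
    · exact ⟨x, by simp, by simp⟩
    · obtain ⟨a, ha, hmax⟩ := ih hs
      by_cases hax : r a x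
      · refine ⟨x, Finset.mem_insert_self _ _, ?_⟩
        intro b hb hxb
        rcases Finset.mem_insert.1 hb with rfl | hb
        · rfl
        · have hab : a = b := hmax b hb (htr hax hxb)
          subst hab
          exact (has hax hxb).symm
      · refine ⟨a, Finset.mem_insert_of_mem ha, ?_⟩
        intro b hb hab
        rcases Finset.mem_insert.1 hb with rfl | hb
        · exact absurd hab hax
        · exact hmax b hb hab

/-- **Lemma 3.1** (abstract Calderón–Zygmund stopping time construction).
Let `⪯` (`le1`) and `⊑` (`le2`) be partial orders on a set `Λ`, let `Γ` be a finite
subset of `Λ` with a nonnegative weight `ν`, and let `A : Λ → (0,∞)`.  Assume that for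
each `γ ∈ Γ` and `N > 0` the set `{λ : A(λ) ≤ N, γ ⊑ λ}` is finite.  Then there are a
subset `ℬ ⊆ Λ` and a map `q : Γ → Λ` such that: (1) `γ ⊑ q(γ)`; (2) `q(γ) ∉ ℬ` implies
`q(γ) = γ`; (3) `∑_{λ∈ℬ} A(λ) ≤ ν(Γ)`; (4) for all `λ ∈ Λ`,
`ν{γ ∈ Γ : q(γ) ≺ λ, γ ⊑ λ} < A(λ)`. -/
theorem statement10 {Λ : Type*}
    (le1 le2 : Λ → Λ → Prop)
    (h1 : IsPartialOrder Λ le1) (h2 : IsPartialOrder Λ le2)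
    (Γ : Finset Λ) (ν : Λ → ℝ) (hν : ∀ γ ∈ Γ, 0 ≤ ν γ)
    (A : Λ → ℝ) (hA : ∀ l, 0 < A l)
    (hfin : ∀ γ ∈ Γ, ∀ N : ℝ, 0 < N → {l : Λ | A l ≤ N ∧ le2 γ l}.Finite) :
    ∃ (B : Set Λ) (q : Λ → Λ),
      (∀ γ ∈ Γ, le2 γ (q γ)) ∧
      (∀ γ ∈ Γ, q γ ∉ B → q γ = γ) ∧
      (∑' l : B, ENNReal.ofReal (A l)) ≤ ENNReal.ofReal (∑ γ ∈ Γ, ν γ) ∧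
      (∀ l : Λ,
        ∑ γ ∈ Γ.filter (fun γ => le1 (q γ) l ∧ q γ ≠ l ∧ le2 γ l), ν γ < A l) := by
  revert hν hfin
  induction Γ using Finset.strongInduction with
  | _ Γ ih =>
  intro hν hfin
  set T : Λ → ℝ := fun l => ∑ γ ∈ Γ.filter (fun γ => le2 γ l), ν γ with hT
  by_cases hall : ∀ l, T l < A l
  · -- trivial case: take q = id, B = ∅
    refine ⟨∅, id, fun γ _ => h2.refl γ, fun γ _ _ => rfl, ?_, ?_⟩
    · simp
    · intro l
      refine lt_of_le_of_lt ?_ (hall l)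
      apply Finset.sum_le_sum_of_subset_of_nonneg
      · exact Finset.monotone_filter_right _ (fun γ _ h => h.2.2)
      · intro i hi _
        exact hν i (Finset.filter_subset _ _ hi)
  · push_neg at hall
    obtain ⟨l₁, hl₁⟩ := hall
    have hTle : ∀ l, T l ≤ ∑ γ ∈ Γ, ν γ := by
      intro l
      apply Finset.sum_le_sum_of_subset_of_nonneg (Finset.filter_subset _ _)
      intro i hi _; exact hν i hi
    have hνΓpos : 0 < ∑ γ ∈ Γ, ν γ := lt_of_lt_of_le (hA l₁) (hl₁.trans (hTle l₁))
    have hne : ∀ l, A l ≤ T l → (Γ.filter (fun γ => le2 γ l)).Nonempty := by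
      intro l hl
      rw [Finset.nonempty_iff_ne_empty]
      intro hemp
      have : T l = 0 := by simp [hT, hemp]
      exact absurd (hl.trans_eq this) (not_le.2 (hA l))
    have Cfin : {l : Λ | A l ≤ T l}.Finite := by
      apply Set.Finite.subset
        (Set.Finite.biUnion Γ.finite_toSet
          (fun γ hγ => hfin γ hγ (∑ γ ∈ Γ, ν γ) hνΓpos))
      intro l hl
      obtain ⟨γ, hγ⟩ := hne l hl
      obtain ⟨hγΓ, hγl⟩ := Finset.mem_filter.1 hγ
      exact Set.mem_biUnion hγΓ ⟨hl.trans (hTle l), hγl⟩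
    obtain ⟨l₀, hl₀mem, hmax⟩ := exists_max_rel le1 (fun h h' => h1.trans _ _ _ h h')
      (fun h h' => h1.antisymm _ _ h h') Cfin.toFinset
      ⟨l₁, Cfin.mem_toFinset.2 hl₁⟩
    have hl₀ : A l₀ ≤ T l₀ := Cfin.mem_toFinset.1 hl₀mem
    obtain ⟨γ₀, hγ₀⟩ := hne l₀ hl₀
    set Γ' : Finset Λ := Γ.filter (fun γ => ¬ le2 γ l₀) with hΓ'
    have hss : Γ' ⊂ Γ := by
      rw [hΓ', Finset.filter_ssubset]
      exact ⟨γ₀, (Finset.mem_filter.1 hγ₀).1, not_not.2 (Finset.mem_filter.1 hγ₀).2⟩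
    have hΓ'sub : ∀ γ ∈ Γ', γ ∈ Γ := fun γ h => Finset.filter_subset _ _ h
    obtain ⟨B', q', hq1', hq2', hq3', hq4'⟩ :=
      ih Γ' hss (fun γ hγ => hν γ (hΓ'sub γ hγ)) (fun γ hγ => hfin γ (hΓ'sub γ hγ))
    refine ⟨insert l₀ B', fun γ => if le2 γ l₀ then l₀ else q' γ, ?_, ?_, ?_, ?_⟩
    · intro γ hγ
      by_cases h : le2 γ l₀
      · simp [h]
      · simpa [h] using hq1' γ (Finset.mem_filter.2 ⟨hγ, h⟩)
    · intro γ hγ hB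
      by_cases h : le2 γ l₀
      · simp only [h, if_true] at hB
        exact absurd (Set.mem_insert _ _) hB
      · simp only [h, if_false] at hB ⊢
        exact hq2' γ (Finset.mem_filter.2 ⟨hγ, h⟩)
          (fun hm => hB (Set.mem_insert_of_mem _ hm))
    · have hsplit : T l₀ + ∑ γ ∈ Γ', ν γ = ∑ γ ∈ Γ, ν γ := by
        rw [hT, hΓ']
        exact Finset.sum_filter_add_sum_filter_not _ _ _
      have hΓ'nonneg : 0 ≤ ∑ γ ∈ Γ', ν γ :=
        Finset.sum_nonneg (fun γ hγ => hν γ (hΓ'sub γ hγ))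
      rw [← Set.singleton_union]
      refine le_trans (ENNReal.tsum_union_le (fun l => ENNReal.ofReal (A l)) {l₀} B') ?_
      rw [tsum_singleton l₀ fun l => ENNReal.ofReal (A l)]
      calc ENNReal.ofReal (A l₀) + ∑' l : B', ENNReal.ofReal (A l)
          ≤ ENNReal.ofReal (A l₀) + ENNReal.ofReal (∑ γ ∈ Γ', ν γ) :=
            add_le_add_right hq3' _
        _ = ENNReal.ofReal (A l₀ + ∑ γ ∈ Γ', ν γ) :=
            (ENNReal.ofReal_add (le_of_lt (hA l₀)) hΓ'nonneg).symm
        _ ≤ ENNReal.ofReal (∑ γ ∈ Γ, ν γ) := by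
            apply ENNReal.ofReal_le_ofReal
            rw [← hsplit]
            exact add_le_add_left hl₀ _
    · intro l
      by_cases hcase : le1 l₀ l ∧ l₀ ≠ l
      · have hTl : T l < A l := by
          by_contra h'
          push_neg at h'
          exact hcase.2 (hmax l (Cfin.mem_toFinset.2 h') hcase.1)
        refine lt_of_le_of_lt ?_ hTl
        apply Finset.sum_le_sum_of_subset_of_nonneg
        · exact Finset.monotone_filter_right _ (fun γ _ h => h.2.2)
        · intro i hi _
          exact hν i (Finset.filter_subset _ _ hi)
      · refine lt_of_le_of_lt ?_ (hq4' l)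
        apply Finset.sum_le_sum_of_subset_of_nonneg
        · intro γ hγ
          obtain ⟨hγΓ, hp1, hp2, hp3⟩ := Finset.mem_filter.1 hγ
          by_cases h : le2 γ l₀
          · simp only [h, if_true] at hp1 hp2
            exact absurd ⟨hp1, hp2⟩ hcase
          · simp only [h, if_false] at hp1 hp2
            exact Finset.mem_filter.2 ⟨Finset.mem_filter.2 ⟨hγΓ, h⟩, hp1, hp2, hp3⟩
        · intro i hi _
          exact hν i (hΓ'sub i (Finset.filter_subset _ _ hi))
end
end

section
/- Let {I} be a finite collection of dyadic cubes in ℝ^d with nonnegative coefficients c_I satisfying ∑_I c_I ≤ 1, and set F = ∑_I c_I χ_I/|I|. Let α > 0 and let 𝒥 be a collection of pairwise disjoint dyadic cubes J such that ∑_{J∈𝒥} |J| ≤ C₁ α, ∫_J F(x) dx ≤ C₁ α |J| for each J ∈ 𝒥, the average of F over every dyadic cube not contained in any J ∈ 𝒥 is at most α, and F(x) ≤ C₁ α for a.e. x ∉ ∪_{J∈𝒥} J. For each dyadic cube I define t_I = 0 if I is contained in no J ∈ 𝒥, and otherwise t_I ≥ 0 so that the sidelength of the cube J ∈ 𝒥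 containing I equals 2^{t_I} times the sidelength of I. Then ‖∑_I c_I χ_{2^{t_I}I}/|2^{t_I}I|‖_{L^2(ℝ^d)} ≤ C α^{1/2}, with C depending only on d and C₁. -/
open MeasureTheory Filter Set Real
open scoped ENNReal NNReal Topology

noncomputable section

abbrev Rd (d : ℕ) := EuclideanSpace ℝ (Fin d)

/-- The index of a dyadic cube: a scale `k ∈ ℤ` and a position `z ∈ ℤ^d`. -/
abbrev CubeIdx (d : ℕ) := ℤ × (Fin d → ℤ)

/-- The dyadic cube of sidelength `2^k` at position `z`. -/
def dyadic (d : ℕ) (I : CubeIdx d) : Set (Rd d) :=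
  {x : Rd d | ∀ i : Fin d, x i ∈ Set.Ico ((I.2 i : ℝ) * (2:ℝ) ^ I.1)
    ((I.2 i + 1 : ℝ) * (2:ℝ) ^ I.1)}

/-- The cube `2^t I`: same center as `I`, sidelength `2^t` times that of `I`. -/
def expand (d : ℕ) (I : CubeIdx d) (t : ℕ) : Set (Rd d) :=
  {x : Rd d | ∀ i : Fin d,
    |x i - ((I.2 i : ℝ) + 1/2) * (2:ℝ) ^ I.1| ≤ (2:ℝ) ^ (t : ℤ) * (2:ℝ) ^ I.1 / 2}

/-- The measure of a dyadic cube of scale `k`, namely `2^{kd}`. -/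
def cubeVol (d : ℕ) (k : ℤ) : ℝ := (2:ℝ) ^ (k * (d:ℤ))


lemma two_zpow_pos (k : ℤ) : (0:ℝ) < 2 ^ k := zpow_pos (by norm_num) k

lemma cubeVol_pos (d : ℕ) (k : ℤ) : 0 < cubeVol d k := two_zpow_pos _

lemma dyadic_eq_preimage (d : ℕ) (I : CubeIdx d) :
    dyadic d I = (MeasurableEquiv.toLp 2 (Fin d → ℝ)).symm ⁻¹'
      (Set.univ.pi fun i => Set.Ico ((I.2 i : ℝ) * (2:ℝ) ^ I.1) ((I.2 i + 1 : ℝ) * (2:ℝ) ^ I.1)) := by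
  ext x; simp [dyadic, Set.mem_pi, MeasurableEquiv.toLp]; rfl

lemma measurableSet_dyadic (d : ℕ) (I : CubeIdx d) : MeasurableSet (dyadic d I) := by
  rw [dyadic_eq_preimage]
  exact (MeasurableEquiv.toLp 2 (Fin d → ℝ)).symm.measurable
    (MeasurableSet.univ_pi fun i => measurableSet_Ico)

lemma volume_dyadic (d : ℕ) (I : CubeIdx d) :
    volume (dyadic d I) = ENNReal.ofReal (cubeVol d I.1) := by
  rw [dyadic_eq_preimage,
    (EuclideanSpace.volume_preserving_symm_measurableEquiv_toLp (Fin d)).measure_preimage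
      ((MeasurableSet.univ_pi fun i => measurableSet_Ico).nullMeasurableSet),
    volume_pi_pi]
  have : ∀ i : Fin d, volume (Set.Ico ((I.2 i : ℝ) * (2:ℝ) ^ I.1) ((I.2 i + 1 : ℝ) * (2:ℝ) ^ I.1))
      = ENNReal.ofReal ((2:ℝ) ^ I.1) := by
    intro i; rw [Real.volume_Ico]; ring_nf
  simp only [this, Finset.prod_const, Finset.card_univ, Fintype.card_fin]
  rw [← ENNReal.ofReal_pow (by positivity)]
  congr 1
  rw [cubeVol, ← zpow_natCast (2 ^ I.1 : ℝ) d, ← zpow_mul]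

lemma expand_eq_preimage (d : ℕ) (I : CubeIdx d) (t : ℕ) :
    expand d I t = (MeasurableEquiv.toLp 2 (Fin d → ℝ)).symm ⁻¹'
      (Set.univ.pi fun i => Set.Icc (((I.2 i : ℝ) + 1/2) * (2:ℝ) ^ I.1 - (2:ℝ) ^ (t:ℤ) * (2:ℝ) ^ I.1 / 2)
        (((I.2 i : ℝ) + 1/2) * (2:ℝ) ^ I.1 + (2:ℝ) ^ (t:ℤ) * (2:ℝ) ^ I.1 / 2)) := by
  ext x
  have hx : ∀ i : Fin d, ((MeasurableEquiv.toLp 2 (Fin d → ℝ)).symm x) i = x i := fun _ => rfl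
  simp only [expand, Set.mem_setOf_eq, Set.mem_preimage, Set.mem_pi, Set.mem_univ, true_imp_iff,
    Set.mem_Icc, abs_sub_le_iff, hx]
  constructor
  · intro h i
    constructor <;> linarith [(h i).1, (h i).2]
  · intro h i
    constructor <;> linarith [(h i).1, (h i).2]

lemma measurableSet_expand (d : ℕ) (I : CubeIdx d) (t : ℕ) : MeasurableSet (expand d I t) := by
  rw [expand_eq_preimage]
  exact (MeasurableEquiv.toLp 2 (Fin d → ℝ)).symm.measurable
    (MeasurableSet.univ_pi fun i => measurableSet_Icc)

lemma volume_expand (d : ℕ) (I : CubeIdx d) (t : ℕ) :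
    volume (expand d I t) = ENNReal.ofReal (cubeVol d (I.1 + (t : ℤ))) := by
  rw [expand_eq_preimage,
    (EuclideanSpace.volume_preserving_symm_measurableEquiv_toLp (Fin d)).measure_preimage
      ((MeasurableSet.univ_pi fun i => measurableSet_Icc).nullMeasurableSet),
    volume_pi_pi]
  have h2 : ∀ i : Fin d, volume (Set.Icc (((I.2 i : ℝ) + 1/2) * (2:ℝ) ^ I.1 - (2:ℝ) ^ (t:ℤ) * (2:ℝ) ^ I.1 / 2)
        (((I.2 i : ℝ) + 1/2) * (2:ℝ) ^ I.1 + (2:ℝ) ^ (t:ℤ) * (2:ℝ) ^ I.1 / 2))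
      = ENNReal.ofReal ((2:ℝ) ^ (I.1 + (t:ℤ))) := by
    intro i; rw [Real.volume_Icc]
    congr 1
    rw [zpow_add₀ (two_ne_zero)]
    ring
  simp only [h2, Finset.prod_const, Finset.card_univ, Fintype.card_fin]
  rw [← ENNReal.ofReal_pow (by positivity)]
  congr 1
  rw [cubeVol, ← zpow_natCast (2 ^ (I.1 + (t:ℤ)) : ℝ) d, ← zpow_mul]

lemma center_mem_dyadic (d : ℕ) (I : CubeIdx d) :
    (WithLp.toLp 2 (fun i => ((I.2 i : ℝ) + 1/2) * (2:ℝ) ^ I.1 : Fin d → ℝ) : Rd d) ∈ dyadic d I := by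
  intro i
  have h := two_zpow_pos I.1
  dsimp only
  constructor
  · nlinarith
  · nlinarith

lemma corner_mem_dyadic (d : ℕ) (I : CubeIdx d) :
    (WithLp.toLp 2 (fun i => (I.2 i : ℝ) * (2:ℝ) ^ I.1 : Fin d → ℝ) : Rd d) ∈ dyadic d I := by
  intro i
  have h := two_zpow_pos I.1
  dsimp only
  constructor
  · exact le_rfl
  · nlinarith

lemma scale_le_of_subset {d : ℕ} (hd : 1 ≤ d) {Q J : CubeIdx d}
    (h : dyadic d Q ⊆ dyadic d J) : Q.1 ≤ J.1 := by
  by_contra hlt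
  push_neg at hlt
  set i₀ : Fin d := ⟨0, hd⟩
  have h2Q := two_zpow_pos Q.1
  have h2J := two_zpow_pos J.1
  have hpow : (2:ℝ) ^ J.1 < 2 ^ Q.1 := by
    exact zpow_lt_zpow_right₀ (by norm_num) hlt
  have hy : (WithLp.toLp 2 (fun i => (Q.2 i : ℝ) * (2:ℝ) ^ Q.1 + (2:ℝ) ^ J.1 : Fin d → ℝ) : Rd d) ∈ dyadic d Q := by
    intro i
    dsimp only
    constructor
    · nlinarith
    · nlinarith
  have hx := h (corner_mem_dyadic d Q) i₀
  have hy' := h hy i₀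
  have h1 := hx.1
  have h2 := hy'.2
  nlinarith

lemma eq_of_subset_of_scale_eq {d : ℕ} {Q J : CubeIdx d} (hs : Q.1 = J.1)
    (h : dyadic d Q ⊆ dyadic d J) : Q = J := by
  have hx := h (corner_mem_dyadic d Q)
  have h2 := two_zpow_pos Q.1
  have hz : Q.2 = J.2 := by
    funext i
    have h1 := (hx i).1
    have h2' := (hx i).2
    dsimp only at h1 h2'
    rw [← hs] at h1 h2'
    have hle : (J.2 i : ℝ) ≤ Q.2 i := le_of_mul_le_mul_right h1 h2
    have hlt : (Q.2 i : ℝ) < J.2 i + 1 := lt_of_mul_lt_mul_right h2' h2.le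
    have hle' : J.2 i ≤ Q.2 i := by exact_mod_cast hle
    have hlt' : Q.2 i < J.2 i + 1 := by exact_mod_cast hlt
    omega
  exact Prod.ext hs hz

def anc (d : ℕ) (k : ℤ) (I : CubeIdx d) : CubeIdx d :=
  (k, fun i => I.2 i / (2 ^ (k - I.1).toNat : ℤ))

lemma anc_subset {d : ℕ} {k : ℤ} {I : CubeIdx d} (h : I.1 ≤ k) :
    dyadic d I ⊆ dyadic d (anc d k I) := by
  intro x hx i
  set m : ℕ := (k - I.1).toNat with hm
  have hk : k = I.1 + (m : ℤ) := by omega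
  have hbpos : (0:ℤ) < 2 ^ m := by positivity
  have hlo : (I.2 i / 2 ^ m) * 2 ^ m ≤ I.2 i := Int.ediv_mul_le _ (by positivity)
  have hhi : I.2 i < (I.2 i / 2 ^ m + 1) * 2 ^ m := Int.lt_ediv_add_one_mul_self _ hbpos
  have hloR : ((I.2 i / 2 ^ m : ℤ) : ℝ) * 2 ^ m ≤ (I.2 i : ℝ) := by exact_mod_cast hlo
  have hhiR : (I.2 i : ℝ) + 1 ≤ ((I.2 i / 2 ^ m : ℤ) : ℝ) * 2 ^ m + 2 ^ m := by
    have h' : I.2 i + 1 ≤ (I.2 i / 2 ^ m + 1) * 2 ^ m := Int.add_one_le_iff.mpr hhi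
    have : ((I.2 i + 1 : ℤ) : ℝ) ≤ (((I.2 i / 2 ^ m + 1) * 2 ^ m : ℤ) : ℝ) := by exact_mod_cast h'
    push_cast at this
    linarith
  have hxi := hx i
  have h2I := two_zpow_pos I.1
  have hsplit : (2:ℝ) ^ k = 2 ^ m * 2 ^ I.1 := by
    rw [hk, zpow_add₀ (two_ne_zero)]
    norm_num [zpow_natCast]
    ring
  have h1 := hxi.1
  have h2 := hxi.2
  constructor
  · show ((anc d k I).2 i : ℝ) * 2 ^ k ≤ x i
    simp only [anc]
    rw [hsplit, ← hm]
    nlinarith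
  · show x i < ((anc d k I).2 i + 1 : ℝ) * 2 ^ k
    simp only [anc]
    rw [hsplit, ← hm]
    nlinarith

lemma expand_radius_le {d : ℕ} {I : CubeIdx d} {t : ℕ} {k : ℤ} (h : I.1 + (t:ℤ) ≤ k) :
    (2:ℝ) ^ (t:ℤ) * (2:ℝ) ^ I.1 ≤ (2:ℝ) ^ k := by
  rw [← zpow_add₀ (two_ne_zero : (2:ℝ) ≠ 0)]
  apply zpow_le_zpow_right₀ (by norm_num)
  omega

lemma anc_close {d : ℕ} {I I' : CubeIdx d} {tI tI' : ℕ} {k : ℤ}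
    (hk : k = I.1 + (tI : ℤ)) (hle : I'.1 + (tI' : ℤ) ≤ k)
    (hne : (expand d I' tI' ∩ expand d I tI).Nonempty) (i : Fin d) :
    |(anc d k I').2 i - (anc d k I).2 i| ≤ 1 := by
  obtain ⟨x, hx', hx⟩ := hne
  have hI : I.1 ≤ k := by omega
  have hI' : I'.1 ≤ k := by omega
  have h2k := two_zpow_pos k
  -- centers
  have hc : (WithLp.toLp 2 (fun i => ((I.2 i : ℝ) + 1/2) * (2:ℝ) ^ I.1 : Fin d → ℝ) : Rd d) ∈ dyadic d (anc d k I) :=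
    anc_subset hI (center_mem_dyadic d I)
  have hc' : (WithLp.toLp 2 (fun i => ((I'.2 i : ℝ) + 1/2) * (2:ℝ) ^ I'.1 : Fin d → ℝ) : Rd d) ∈ dyadic d (anc d k I') :=
    anc_subset hI' (center_mem_dyadic d I')
  set φ : ℤ := (anc d k I).2 i with hφ
  set φ' : ℤ := (anc d k I').2 i with hφ'
  have hci := hc i
  have hci' := hc' i
  dsimp only at hci hci'
  -- distances from x to the centers
  have hd1 := hx i
  have hd2 := hx' i
  rw [abs_le] at hd1 hd2
  have hr1 : (2:ℝ) ^ (tI:ℤ) * (2:ℝ) ^ I.1 ≤ (2:ℝ) ^ k := expand_radius_le (le_of_eq hk.symm)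
  have hr2 : (2:ℝ) ^ (tI':ℤ) * (2:ℝ) ^ I'.1 ≤ (2:ℝ) ^ k := expand_radius_le hle
  -- |c - c'| ≤ 2^k
  have hcc : |((I.2 i : ℝ) + 1/2) * (2:ℝ) ^ I.1 - ((I'.2 i : ℝ) + 1/2) * (2:ℝ) ^ I'.1| ≤ 2 ^ k := by
    rw [abs_le]; constructor <;> linarith [hd1.1, hd1.2, hd2.1, hd2.2]
  rw [abs_le] at hcc
  have hb1 : (φ' : ℝ) < φ + 2 := by
    have h1 : (φ' : ℝ) * 2 ^ k ≤ ((I'.2 i : ℝ) + 1/2) * (2:ℝ) ^ I'.1 := hci'.1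
    have h2 : ((I.2 i : ℝ) + 1/2) * (2:ℝ) ^ I.1 < ((φ : ℝ) + 1) * 2 ^ k := hci.2
    nlinarith
  have hb2 : (φ : ℝ) < φ' + 2 := by
    have h1 : (φ : ℝ) * 2 ^ k ≤ ((I.2 i : ℝ) + 1/2) * (2:ℝ) ^ I.1 := hci.1
    have h2 : ((I'.2 i : ℝ) + 1/2) * (2:ℝ) ^ I'.1 < ((φ' : ℝ) + 1) * 2 ^ k := hci'.2
    nlinarith
  have hb1' : φ' < φ + 2 := by exact_mod_cast hb1
  have hb2' : φ < φ' + 2 := by exact_mod_cast hb2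
  rw [abs_le]
  omega

lemma indicator_term_eq {d : ℕ} (c : CubeIdx d → ℝ) (I : CubeIdx d) :
    (fun x => c I * (dyadic d I).indicator (fun _ => (1:ℝ)) x / cubeVol d I.1)
      = (dyadic d I).indicator (fun _ => c I / cubeVol d I.1) := by
  funext x
  by_cases hx : x ∈ dyadic d I <;> simp [Set.indicator_apply, hx]

lemma integrableOn_term {d : ℕ} (c : CubeIdx d → ℝ) (I : CubeIdx d) (s : Set (Rd d)) :
    IntegrableOn (fun x => c I * (dyadic d I).indicator (fun _ => (1:ℝ)) x / cubeVol d I.1)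
      s volume := by
  rw [indicator_term_eq]
  refine (integrable_indicator_iff (measurableSet_dyadic d I)).2 ?_
  refine integrableOn_const (ne_of_lt ?_)
  calc (volume.restrict s) (dyadic d I) ≤ volume (dyadic d I) := Measure.restrict_le_self _
    _ < ⊤ := by rw [volume_dyadic]; exact ENNReal.ofReal_lt_top

lemma sum_le_setIntegral {d : ℕ} (S S' : Finset (CubeIdx d)) (c : CubeIdx d → ℝ)
    (hc : ∀ I, 0 ≤ c I) (Q : CubeIdx d) (hS' : S' ⊆ S)
    (hsub : ∀ I ∈ S', dyadic d I ⊆ dyadic d Q) :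
    ∑ I ∈ S', c I ≤ ∫ x in dyadic d Q,
      (∑ I ∈ S, c I * (dyadic d I).indicator (fun _ => 1) x / cubeVol d I.1) := by
  have hcomp : ∫ x in dyadic d Q,
      (∑ I ∈ S, c I * (dyadic d I).indicator (fun _ => 1) x / cubeVol d I.1)
      = ∑ I ∈ S, (volume (dyadic d Q ∩ dyadic d I)).toReal * (c I / cubeVol d I.1) := by
    rw [integral_finset_sum S (fun I _ => integrableOn_term c I (dyadic d Q))]
    refine Finset.sum_congr rfl fun I _ => ?_
    rw [indicator_term_eq, setIntegral_indicator (measurableSet_dyadic d I),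
      setIntegral_const, smul_eq_mul, measureReal_def]
  rw [hcomp]
  have hterm : ∀ I ∈ S', c I = (volume (dyadic d Q ∩ dyadic d I)).toReal * (c I / cubeVol d I.1) := by
    intro I hI
    rw [Set.inter_eq_self_of_subset_right (hsub I hI), volume_dyadic,
      ENNReal.toReal_ofReal (cubeVol_pos d I.1).le]
    rw [mul_div_cancel₀ _ (cubeVol_pos d I.1).ne']
  calc ∑ I ∈ S', c I
      = ∑ I ∈ S', (volume (dyadic d Q ∩ dyadic d I)).toReal * (c I / cubeVol d I.1) :=
        Finset.sum_congr rfl hterm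
    _ ≤ ∑ I ∈ S, (volume (dyadic d Q ∩ dyadic d I)).toReal * (c I / cubeVol d I.1) := by
        refine Finset.sum_le_sum_of_subset_of_nonneg hS' fun I _ _ => ?_
        have := hc I
        have := (cubeVol_pos d I.1).le
        positivity

open scoped Classical in
lemma lemmaB {d : ℕ} (hd : 1 ≤ d) {C₁ α : ℝ} (hα : 0 < α)
    (S : Finset (CubeIdx d)) (c : CubeIdx d → ℝ) (hc : ∀ I, 0 ≤ c I)
    (𝒥 : Finset (CubeIdx d))
    (h3 : ∀ J ∈ 𝒥, ∫ x in dyadic d J,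
        (∑ I ∈ S, c I * (dyadic d I).indicator (fun _ => 1) x / cubeVol d I.1)
      ≤ C₁ * α * cubeVol d J.1)
    (h4 : ∀ Q : CubeIdx d, (¬ ∃ J ∈ 𝒥, dyadic d Q ⊆ dyadic d J) →
      ∫ x in dyadic d Q,
        (∑ I ∈ S, c I * (dyadic d I).indicator (fun _ => 1) x / cubeVol d I.1)
      ≤ α * cubeVol d Q.1)
    (t : CubeIdx d → ℕ)
    (ht2 : ∀ I, ∀ J ∈ 𝒥, dyadic d I ⊆ dyadic d J → J.1 = I.1 + (t I : ℤ))
    (k : ℤ) (z : Fin d → ℤ) :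
    ∑ I' ∈ S.filter (fun I' => I'.1 + (t I' : ℤ) ≤ k ∧ dyadic d I' ⊆ dyadic d (k, z)), c I'
      ≤ max 1 C₁ * α * cubeVol d k := by
  have hQ1 : ((k, z) : CubeIdx d).1 = k := rfl
  have hvol := cubeVol_pos d k
  have hmax1 : (1:ℝ) ≤ max 1 C₁ := le_max_left _ _
  have hmaxC : C₁ ≤ max 1 C₁ := le_max_right _ _
  set T := S.filter (fun I' => I'.1 + (t I' : ℤ) ≤ k ∧ dyadic d I' ⊆ dyadic d (k, z)) with hT
  have hsub : ∀ I' ∈ T, dyadic d I' ⊆ dyadic d (k, z) := by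
    intro I' hI'; exact ((Finset.mem_filter.mp hI').2).2
  have hTS : T ⊆ S := Finset.filter_subset _ _
  have hint := sum_le_setIntegral S T c hc (k, z) hTS hsub
  by_cases hQ : ∃ J ∈ 𝒥, dyadic d (k, z) ⊆ dyadic d J
  · obtain ⟨J, hJ, hQJ⟩ := hQ
    rcases T.eq_empty_or_nonempty with he | ⟨I₀, hI₀⟩
    · rw [he, Finset.sum_empty]; positivity
    · obtain ⟨hI₀S, hI₀k, hI₀sub⟩ := Finset.mem_filter.mp hI₀
      have hJk : J.1 = I₀.1 + (t I₀ : ℤ) := ht2 I₀ J hJ (hI₀sub.trans hQJ)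
      have hk2 : k ≤ J.1 := scale_le_of_subset hd hQJ
      have hQeqJ : ((k, z) : CubeIdx d) = J := eq_of_subset_of_scale_eq (by omega) hQJ
      calc ∑ I' ∈ T, c I' ≤ _ := hint
        _ ≤ C₁ * α * cubeVol d J.1 := by rw [hQeqJ]; exact h3 J hJ
        _ = C₁ * α * cubeVol d k := by rw [← hQeqJ]
        _ ≤ max 1 C₁ * α * cubeVol d k :=
          mul_le_mul_of_nonneg_right (mul_le_mul_of_nonneg_right hmaxC hα.le) hvol.le
  · calc ∑ I' ∈ T, c I' ≤ _ := hint
      _ ≤ α * cubeVol d k := h4 (k, z) hQ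
      _ ≤ max 1 C₁ * α * cubeVol d k := by
          have := mul_le_mul_of_nonneg_right (mul_le_mul_of_nonneg_right hmax1 hα.le) hvol.le
          linarith

lemma card_three (a : ℤ) : ({a - 1, a, a + 1} : Finset ℤ).card ≤ 3 := by
  calc ({a - 1, a, a + 1} : Finset ℤ).card ≤ ({a, a + 1} : Finset ℤ).card + 1 :=
        Finset.card_insert_le _ _
    _ ≤ (({a + 1} : Finset ℤ).card + 1) + 1 := by
        exact Nat.add_le_add_right (Finset.card_insert_le a {a + 1}) 1
    _ = 3 := by simp

open scoped Classical in
lemma lemmaA {d : ℕ} (hd : 1 ≤ d) {C₁ α : ℝ} (hα : 0 < α)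
    (S : Finset (CubeIdx d)) (c : CubeIdx d → ℝ) (hc : ∀ I, 0 ≤ c I)
    (𝒥 : Finset (CubeIdx d))
    (h3 : ∀ J ∈ 𝒥, ∫ x in dyadic d J,
        (∑ I ∈ S, c I * (dyadic d I).indicator (fun _ => 1) x / cubeVol d I.1)
      ≤ C₁ * α * cubeVol d J.1)
    (h4 : ∀ Q : CubeIdx d, (¬ ∃ J ∈ 𝒥, dyadic d Q ⊆ dyadic d J) →
      ∫ x in dyadic d Q,
        (∑ I ∈ S, c I * (dyadic d I).indicator (fun _ => 1) x / cubeVol d I.1)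
      ≤ α * cubeVol d Q.1)
    (t : CubeIdx d → ℕ)
    (ht2 : ∀ I, ∀ J ∈ 𝒥, dyadic d I ⊆ dyadic d J → J.1 = I.1 + (t I : ℤ))
    (I : CubeIdx d) :
    ∑ I' ∈ S.filter (fun I' => I'.1 + (t I' : ℤ) ≤ I.1 + (t I : ℤ) ∧
        (expand d I' (t I') ∩ expand d I (t I)).Nonempty), c I'
      ≤ (3:ℝ) ^ d * max 1 C₁ * α * cubeVol d (I.1 + (t I : ℤ)) := by
  set k : ℤ := I.1 + (t I : ℤ) with hk
  set z₀ : Fin d → ℤ := (anc d k I).2 with hz₀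
  set Z : Finset (Fin d → ℤ) :=
    Fintype.piFinset (fun i => ({z₀ i - 1, z₀ i, z₀ i + 1} : Finset ℤ)) with hZ
  set T := S.filter (fun I' => I'.1 + (t I' : ℤ) ≤ k ∧
    (expand d I' (t I') ∩ expand d I (t I)).Nonempty) with hT
  have hmaps : ∀ I' ∈ T, (anc d k I').2 ∈ Z := by
    intro I' hI'
    obtain ⟨hI'S, hI'k, hI'ne⟩ := Finset.mem_filter.mp hI'
    rw [hZ, Fintype.mem_piFinset]
    intro i
    have := anc_close hk hI'k hI'ne i
    have h1 : (anc d k I').2 i - z₀ i ≤ 1 := by rw [abs_le] at this; exact this.2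
    have h2 : -(1:ℤ) ≤ (anc d k I').2 i - z₀ i := by rw [abs_le] at this; exact this.1
    simp only [Finset.mem_insert, Finset.mem_singleton]
    omega
  rw [← Finset.sum_fiberwise_of_maps_to hmaps c]
  have hfib : ∀ z ∈ Z, ∑ I' ∈ T.filter (fun I' => (anc d k I').2 = z), c I'
      ≤ max 1 C₁ * α * cubeVol d k := by
    intro z _
    refine le_trans ?_ (lemmaB hd hα S c hc 𝒥 h3 h4 t ht2 k z)
    refine Finset.sum_le_sum_of_subset_of_nonneg ?_ (fun I' _ _ => hc I')
    intro I' hI'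
    obtain ⟨hI'T, hanc⟩ := Finset.mem_filter.mp hI'
    obtain ⟨hI'S, hI'k, hI'ne⟩ := Finset.mem_filter.mp hI'T
    refine Finset.mem_filter.mpr ⟨hI'S, hI'k, ?_⟩
    have : ((k, z) : CubeIdx d) = anc d k I' := by
      refine Prod.ext rfl ?_
      exact hanc.symm
    rw [this]
    exact anc_subset (by omega)
  calc ∑ z ∈ Z, ∑ I' ∈ T.filter (fun I' => (anc d k I').2 = z), c I'
      ≤ Z.card • (max 1 C₁ * α * cubeVol d k) := Finset.sum_le_card_nsmul _ _ _ hfib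
    _ ≤ (3:ℝ) ^ d * max 1 C₁ * α * cubeVol d k := by
        rw [nsmul_eq_mul]
        have hcard : (Z.card : ℝ) ≤ 3 ^ d := by
          have h1 : Z.card ≤ 3 ^ d := by
            rw [hZ, Fintype.card_piFinset]
            calc ∏ i : Fin d, ({z₀ i - 1, z₀ i, z₀ i + 1} : Finset ℤ).card
                ≤ ∏ _i : Fin d, 3 :=
                  Finset.prod_le_prod (fun _ _ => Nat.zero_le _) (fun i _ => card_three (z₀ i))
              _ = 3 ^ d := by simp
          calc (Z.card : ℝ) ≤ ((3 ^ d : ℕ) : ℝ) := by exact_mod_cast h1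
            _ = 3 ^ d := by push_cast; ring
        have hpos : (0:ℝ) ≤ max 1 C₁ * α * cubeVol d k := by
          have := cubeVol_pos d k
          have : (0:ℝ) < max 1 C₁ := lt_of_lt_of_le one_pos (le_max_left _ _)
          positivity
        calc (Z.card : ℝ) * (max 1 C₁ * α * cubeVol d k)
            ≤ 3 ^ d * (max 1 C₁ * α * cubeVol d k) := mul_le_mul_of_nonneg_right hcard hpos
          _ = (3:ℝ) ^ d * max 1 C₁ * α * cubeVol d k := by ring

open scoped Classical in
lemma lemmaT {d : ℕ} (hd : 1 ≤ d) {C₁ α : ℝ} (hα : 0 < α)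
    (S : Finset (CubeIdx d)) (c : CubeIdx d → ℝ) (hc : ∀ I, 0 ≤ c I)
    (hsum : (∑ I ∈ S, c I) ≤ 1)
    (𝒥 : Finset (CubeIdx d))
    (h3 : ∀ J ∈ 𝒥, ∫ x in dyadic d J,
        (∑ I ∈ S, c I * (dyadic d I).indicator (fun _ => 1) x / cubeVol d I.1)
      ≤ C₁ * α * cubeVol d J.1)
    (h4 : ∀ Q : CubeIdx d, (¬ ∃ J ∈ 𝒥, dyadic d Q ⊆ dyadic d J) →
      ∫ x in dyadic d Q,
        (∑ I ∈ S, c I * (dyadic d I).indicator (fun _ => 1) x / cubeVol d I.1)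
      ≤ α * cubeVol d Q.1)
    (t : CubeIdx d → ℕ)
    (ht2 : ∀ I, ∀ J ∈ 𝒥, dyadic d I ⊆ dyadic d J → J.1 = I.1 + (t I : ℤ)) :
    ∑ I ∈ S, ∑ I' ∈ S,
      c I * c I' / (cubeVol d (I.1 + (t I : ℤ)) * cubeVol d (I'.1 + (t I' : ℤ)))
        * (volume (expand d I (t I) ∩ expand d I' (t I'))).toReal
      ≤ 2 * ((3:ℝ) ^ d * max 1 C₁) * α := by
  set v : CubeIdx d → ℝ := fun I => cubeVol d (I.1 + (t I : ℤ)) with hv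
  set κ : CubeIdx d → ℤ := fun I => I.1 + (t I : ℤ) with hκ
  set W : CubeIdx d → CubeIdx d → ℝ :=
    fun I I' => (volume (expand d I (t I) ∩ expand d I' (t I'))).toReal with hW
  set p : CubeIdx d → CubeIdx d → ℝ := fun I I' => c I * c I' / (v I * v I') * W I I' with hp
  have hvpos : ∀ I, 0 < v I := fun I => cubeVol_pos _ _
  have hWnn : ∀ I I', 0 ≤ W I I' := fun I I' => ENNReal.toReal_nonneg
  have hWle : ∀ I I', W I I' ≤ v I' := by
    intro I I'
    have h1 : volume (expand d I (t I) ∩ expand d I' (t I')) ≤ volume (expand d I' (t I')) :=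
      measure_mono Set.inter_subset_right
    rw [volume_expand] at h1
    calc W I I' ≤ (ENNReal.ofReal (v I')).toReal := ENNReal.toReal_mono ENNReal.ofReal_ne_top h1
      _ = v I' := ENNReal.toReal_ofReal (hvpos I').le
  have hWsym : ∀ I I', W I I' = W I' I := by
    intro I I'; rw [hW]; simp only []; rw [Set.inter_comm]
  have hpnn : ∀ I I', 0 ≤ p I I' := by
    intro I I'
    have := (hc I); have := hc I'; have := (hvpos I).le; have := (hvpos I').le
    have := hWnn I I'
    positivity
  have hpsym : ∀ I I', p I I' = p I' I := by
    intro I I'; rw [hp]; simp only []; rw [hWsym I I']; ring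
  -- bound inner sums
  have hinner : ∀ I ∈ S, ∑ I' ∈ S, (if κ I' ≤ κ I then p I I' else 0)
      ≤ c I * ((3:ℝ) ^ d * max 1 C₁ * α) := by
    intro I _
    have hstep : ∀ I' ∈ S, (if κ I' ≤ κ I then p I I' else 0)
        ≤ (if κ I' ≤ κ I ∧ (expand d I' (t I') ∩ expand d I (t I)).Nonempty
            then c I / v I * c I' else 0) := by
      intro I' _
      by_cases h1 : κ I' ≤ κ I
      · by_cases h2 : (expand d I' (t I') ∩ expand d I (t I)).Nonempty
        · simp only [h1, h2, and_self, if_true]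
          have hW' : W I I' ≤ v I' := hWle I I'
          calc p I I' = c I * c I' / (v I * v I') * W I I' := rfl
            _ ≤ c I * c I' / (v I * v I') * v I' := by
                apply mul_le_mul_of_nonneg_left hW'
                have := hc I; have := hc I'; have := (hvpos I).le; have := (hvpos I').le
                positivity
            _ = c I / v I * c I' := by
                have hvne : v I' ≠ 0 := (hvpos I').ne'
                field_simp [hvne]
        · have hempty : expand d I (t I) ∩ expand d I' (t I') = ∅ := by
            rw [Set.not_nonempty_iff_eq_empty] at h2
            rw [Set.inter_comm]; exact h2
          have : W I I' = 0 := by rw [hW]; simp only []; rw [hempty]; simp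
          simp only [h1, if_true, h2, and_false, if_false]
          rw [hp]; simp only []; rw [this, mul_zero]
      · simp [h1]
    calc ∑ I' ∈ S, (if κ I' ≤ κ I then p I I' else 0)
        ≤ ∑ I' ∈ S, (if κ I' ≤ κ I ∧ (expand d I' (t I') ∩ expand d I (t I)).Nonempty
            then c I / v I * c I' else 0) := Finset.sum_le_sum hstep
      _ = ∑ I' ∈ Finset.filter (fun I' => κ I' ≤ κ I ∧
            (expand d I' (t I') ∩ expand d I (t I)).Nonempty) S, c I / v I * c I' := by
          rw [Finset.sum_filter]
      _ = c I / v I * ∑ I' ∈ Finset.filter (fun I' => κ I' ≤ κ I ∧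
            (expand d I' (t I') ∩ expand d I (t I)).Nonempty) S, c I' := by
          rw [Finset.mul_sum]
      _ ≤ c I / v I * ((3:ℝ) ^ d * max 1 C₁ * α * v I) := by
          apply mul_le_mul_of_nonneg_left _ (div_nonneg (hc I) (hvpos I).le)
          exact lemmaA hd hα S c hc 𝒥 h3 h4 t ht2 I
      _ = c I * ((3:ℝ) ^ d * max 1 C₁ * α) := by
          have hvne : v I ≠ 0 := (hvpos I).ne'
          field_simp [hvne]
  -- symmetrization
  have hsplit : ∀ I ∈ S, ∀ I' ∈ S, p I I'
      ≤ (if κ I' ≤ κ I then p I I' else 0) + (if κ I ≤ κ I' then p I I' else 0) := by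
    intro I _ I' _
    by_cases h1 : κ I' ≤ κ I
    · simp only [h1, if_true]
      have : (0:ℝ) ≤ (if κ I ≤ κ I' then p I I' else 0) := by
        split; exacts [hpnn I I', le_rfl]
      linarith
    · have h2 : κ I ≤ κ I' := by omega
      simp only [h1, if_false, h2, if_true, zero_add, le_refl]
  have hB2 : ∑ I ∈ S, ∑ I' ∈ S, (if κ I ≤ κ I' then p I I' else 0)
      = ∑ I ∈ S, ∑ I' ∈ S, (if κ I' ≤ κ I then p I I' else 0) := by
    rw [Finset.sum_comm]
    refine Finset.sum_congr rfl fun I _ => Finset.sum_congr rfl fun I' _ => ?_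
    rw [hpsym I' I]
  calc ∑ I ∈ S, ∑ I' ∈ S, p I I'
      ≤ ∑ I ∈ S, ∑ I' ∈ S,
          ((if κ I' ≤ κ I then p I I' else 0) + (if κ I ≤ κ I' then p I I' else 0)) := by
        refine Finset.sum_le_sum fun I hI => Finset.sum_le_sum fun I' hI' => hsplit I hI I' hI'
    _ = ∑ I ∈ S, ∑ I' ∈ S, (if κ I' ≤ κ I then p I I' else 0)
        + ∑ I ∈ S, ∑ I' ∈ S, (if κ I ≤ κ I' then p I I' else 0) := by
        rw [← Finset.sum_add_distrib]
        refine Finset.sum_congr rfl fun I _ => ?_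
        rw [← Finset.sum_add_distrib]
    _ = 2 * ∑ I ∈ S, ∑ I' ∈ S, (if κ I' ≤ κ I then p I I' else 0) := by
        rw [hB2]; ring
    _ ≤ 2 * ∑ I ∈ S, c I * ((3:ℝ) ^ d * max 1 C₁ * α) := by
        have := Finset.sum_le_sum hinner
        linarith
    _ = 2 * (∑ I ∈ S, c I) * ((3:ℝ) ^ d * max 1 C₁ * α) := by
        rw [← Finset.sum_mul]; ring
    _ ≤ 2 * 1 * ((3:ℝ) ^ d * max 1 C₁ * α) := by
        apply mul_le_mul_of_nonneg_right (by linarith) ?_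
        have h1 : (0:ℝ) < max 1 C₁ := lt_of_lt_of_le one_pos (le_max_left _ _)
        positivity
    _ = 2 * ((3:ℝ) ^ d * max 1 C₁) * α := by ring

/-- **Lemma 7.2.** With the stopping times `t_I` produced by the Calderón–Zygmund
decomposition of `F = ∑_I c_I χ_I/|I|` at height `α`, one has
`‖∑_I c_I χ_{2^{t_I}I}/|2^{t_I}I|‖₂ ≲ α^{1/2}`. -/
theorem statement15 (d : ℕ) (hd : 1 ≤ d) (C₁ : ℝ) (hC₁ : 0 < C₁) :
    ∃ C : ℝ, 0 < C ∧
      ∀ (α : ℝ), 0 < α →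
      ∀ (S : Finset (CubeIdx d)) (c : CubeIdx d → ℝ), (∀ I, 0 ≤ c I) →
        (∑ I ∈ S, c I) ≤ 1 →
      -- the Calderón–Zygmund cubes 𝒥 at height α for F = ∑ c_I χ_I / |I| :
      ∀ (𝒥 : Finset (CubeIdx d)),
        (∀ J ∈ 𝒥, ∀ J' ∈ 𝒥, J ≠ J' → Disjoint (dyadic d J) (dyadic d J')) →
        (∑ J ∈ 𝒥, cubeVol d J.1 ≤ C₁ * α) →
        (∀ J ∈ 𝒥, ∫ x in dyadic d J,
            (∑ I ∈ S, c I * (dyadic d I).indicator (fun _ => 1) x / cubeVol d I.1)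
          ≤ C₁ * α * cubeVol d J.1) →
        (∀ Q : CubeIdx d, (¬ ∃ J ∈ 𝒥, dyadic d Q ⊆ dyadic d J) →
          ∫ x in dyadic d Q,
            (∑ I ∈ S, c I * (dyadic d I).indicator (fun _ => 1) x / cubeVol d I.1)
          ≤ α * cubeVol d Q.1) →
        (∀ᵐ x : Rd d, x ∉ ⋃ J ∈ 𝒥, dyadic d J →
          (∑ I ∈ S, c I * (dyadic d I).indicator (fun _ => 1) x / cubeVol d I.1) ≤ C₁ * α) →
      -- the stopping times t_I :
      ∀ t : CubeIdx d → ℕ,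
        (∀ I, (¬ ∃ J ∈ 𝒥, dyadic d I ⊆ dyadic d J) → t I = 0) →
        (∀ I, ∀ J ∈ 𝒥, dyadic d I ⊆ dyadic d J → J.1 = I.1 + (t I : ℤ)) →
      eLpNorm (fun x : Rd d =>
          ∑ I ∈ S, c I * (expand d I (t I)).indicator (fun _ => 1) x
            / cubeVol d (I.1 + (t I : ℤ))) 2 volume
        ≤ ENNReal.ofReal (C * Real.sqrt α) := by
  set K : ℝ := 2 * ((3:ℝ) ^ d * max 1 C₁) with hK
  have hKpos : 0 < K := by
    have h1 : (0:ℝ) < max 1 C₁ := lt_of_lt_of_le one_pos (le_max_left _ _)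
    positivity
  refine ⟨Real.sqrt K, Real.sqrt_pos.mpr hKpos, ?_⟩
  intro α hα S c hc hsum 𝒥 h1 h2 h3 h4 h5 t ht1 ht2
  set v : CubeIdx d → ℝ := fun I => cubeVol d (I.1 + (t I : ℤ)) with hv
  set G : Rd d → ℝ := fun x =>
    ∑ I ∈ S, c I * (expand d I (t I)).indicator (fun _ => 1) x / cubeVol d (I.1 + (t I : ℤ))
    with hG
  have hvpos : ∀ I, 0 < v I := fun I => cubeVol_pos _ _
  have hindnn : ∀ (s : Set (Rd d)) (x : Rd d), 0 ≤ s.indicator (fun _ => (1:ℝ)) x :=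
    fun s x => Set.indicator_nonneg (fun _ _ => zero_le_one) x
  have hGnn : ∀ x, 0 ≤ G x := by
    intro x
    refine Finset.sum_nonneg fun I _ => ?_
    have h1 := hc I
    have h2 := (cubeVol_pos d (I.1 + (t I : ℤ))).le
    have h3 := hindnn (expand d I (t I)) x
    positivity
  -- pointwise expansion of the square
  have hprod : ∀ (I I' : CubeIdx d) (x : Rd d),
      (c I * (expand d I (t I)).indicator (fun _ => (1:ℝ)) x / cubeVol d (I.1 + (t I : ℤ))) *
      (c I' * (expand d I' (t I')).indicator (fun _ => (1:ℝ)) x / cubeVol d (I'.1 + (t I' : ℤ)))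
      = (expand d I (t I) ∩ expand d I' (t I')).indicator
          (fun _ => c I * c I' / (cubeVol d (I.1 + (t I : ℤ)) * cubeVol d (I'.1 + (t I' : ℤ)))) x := by
    intro I I' x
    by_cases hx1 : x ∈ expand d I (t I) <;> by_cases hx2 : x ∈ expand d I' (t I')
    · rw [Set.indicator_of_mem hx1, Set.indicator_of_mem hx2,
        Set.indicator_of_mem (Set.mem_inter hx1 hx2)]
      ring
    · rw [Set.indicator_of_notMem hx2,
        Set.indicator_of_notMem (fun h => hx2 (Set.mem_of_mem_inter_right h))]
      ring
    · rw [Set.indicator_of_notMem hx1,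
        Set.indicator_of_notMem (fun h => hx1 (Set.mem_of_mem_inter_left h))]
      ring
    · rw [Set.indicator_of_notMem hx1,
        Set.indicator_of_notMem (fun h => hx1 (Set.mem_of_mem_inter_left h))]
      ring
  have hsq : ∀ x, G x * G x = ∑ I ∈ S, ∑ I' ∈ S,
      (expand d I (t I) ∩ expand d I' (t I')).indicator
        (fun _ => c I * c I' / (cubeVol d (I.1 + (t I : ℤ)) * cubeVol d (I'.1 + (t I' : ℤ)))) x := by
    intro x
    rw [hG]
    rw [Finset.sum_mul_sum]
    exact Finset.sum_congr rfl fun I _ => Finset.sum_congr rfl fun I' _ => hprod I I' x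
  have hofind : ∀ (I I' : CubeIdx d) (x : Rd d),
      ENNReal.ofReal ((expand d I (t I) ∩ expand d I' (t I')).indicator
        (fun _ => c I * c I' / (cubeVol d (I.1 + (t I : ℤ)) * cubeVol d (I'.1 + (t I' : ℤ)))) x)
      = (expand d I (t I) ∩ expand d I' (t I')).indicator
        (fun _ => ENNReal.ofReal (c I * c I' / (cubeVol d (I.1 + (t I : ℤ)) * cubeVol d (I'.1 + (t I' : ℤ))))) x := by
    intro I I' x
    by_cases hx : x ∈ expand d I (t I) ∩ expand d I' (t I')
    · rw [Set.indicator_of_mem hx, Set.indicator_of_mem hx]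
    · rw [Set.indicator_of_notMem hx, Set.indicator_of_notMem hx, ENNReal.ofReal_zero]
  have hindnn' : ∀ (I I' : CubeIdx d) (x : Rd d),
      0 ≤ (expand d I (t I) ∩ expand d I' (t I')).indicator
        (fun _ => c I * c I' / (cubeVol d (I.1 + (t I : ℤ)) * cubeVol d (I'.1 + (t I' : ℤ)))) x := by
    intro I I' x
    refine Set.indicator_nonneg (fun _ _ => ?_) x
    have := hc I; have := hc I'
    have := (cubeVol_pos d (I.1 + (t I : ℤ))).le
    have := (cubeVol_pos d (I'.1 + (t I' : ℤ))).le
    positivity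
  have hpoint : ∀ x, ((‖G x‖₊ : ℝ≥0∞)) ^ (2:ℝ) = ∑ I ∈ S, ∑ I' ∈ S,
      (expand d I (t I) ∩ expand d I' (t I')).indicator
        (fun _ => ENNReal.ofReal (c I * c I' / (cubeVol d (I.1 + (t I : ℤ)) * cubeVol d (I'.1 + (t I' : ℤ))))) x := by
    intro x
    rw [← enorm_eq_nnnorm, Real.enorm_eq_ofReal (hGnn x),
      ENNReal.ofReal_rpow_of_nonneg (hGnn x) (by norm_num : (0:ℝ) ≤ 2)]
    rw [show (G x) ^ (2:ℝ) = G x * G x by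
      rw [show (2:ℝ) = ((2:ℕ):ℝ) by norm_num, Real.rpow_natCast]; ring]
    rw [hsq x, ENNReal.ofReal_sum_of_nonneg
      (fun I _ => Finset.sum_nonneg fun I' _ => hindnn' I I' x)]
    refine Finset.sum_congr rfl fun I _ => ?_
    rw [ENNReal.ofReal_sum_of_nonneg (fun I' _ => hindnn' I I' x)]
    exact Finset.sum_congr rfl fun I' _ => hofind I I' x
  -- the lintegral computation
  have hmeasInter : ∀ (I I' : CubeIdx d), MeasurableSet (expand d I (t I) ∩ expand d I' (t I')) :=
    fun I I' => (measurableSet_expand d I (t I)).inter (measurableSet_expand d I' (t I'))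
  have hfin : ∀ (I I' : CubeIdx d), volume (expand d I (t I) ∩ expand d I' (t I')) ≠ ⊤ := by
    intro I I'
    refine ne_top_of_le_ne_top ?_ (measure_mono Set.inter_subset_left)
    rw [volume_expand]
    exact ENNReal.ofReal_ne_top
  have hlint : ∫⁻ x, ((‖G x‖₊ : ℝ≥0∞)) ^ (2:ℝ) = ∑ I ∈ S, ∑ I' ∈ S,
      ENNReal.ofReal (c I * c I' / (cubeVol d (I.1 + (t I : ℤ)) * cubeVol d (I'.1 + (t I' : ℤ))))
        * volume (expand d I (t I) ∩ expand d I' (t I')) := by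
    rw [lintegral_congr hpoint]
    rw [lintegral_finset_sum _ (fun I _ => Finset.measurable_sum _
      (fun I' _ => (measurable_const.indicator (hmeasInter I I'))))]
    refine Finset.sum_congr rfl fun I _ => ?_
    rw [lintegral_finset_sum _ (fun I' _ => (measurable_const.indicator (hmeasInter I I')))]
    refine Finset.sum_congr rfl fun I' _ => ?_
    exact lintegral_indicator_const (hmeasInter I I') _
  have hanonneg : ∀ (I I' : CubeIdx d),
      0 ≤ c I * c I' / (cubeVol d (I.1 + (t I : ℤ)) * cubeVol d (I'.1 + (t I' : ℤ))) := by
    intro I I'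
    have := hc I; have := hc I'
    have := (cubeVol_pos d (I.1 + (t I : ℤ))).le
    have := (cubeVol_pos d (I'.1 + (t I' : ℤ))).le
    positivity
  have hlint2 : ∫⁻ x, ((‖G x‖₊ : ℝ≥0∞)) ^ (2:ℝ) = ENNReal.ofReal (∑ I ∈ S, ∑ I' ∈ S,
      c I * c I' / (cubeVol d (I.1 + (t I : ℤ)) * cubeVol d (I'.1 + (t I' : ℤ)))
        * (volume (expand d I (t I) ∩ expand d I' (t I'))).toReal) := by
    rw [hlint, ENNReal.ofReal_sum_of_nonneg (fun I _ => Finset.sum_nonneg fun I' _ =>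
      mul_nonneg (hanonneg I I') ENNReal.toReal_nonneg)]
    refine Finset.sum_congr rfl fun I _ => ?_
    rw [ENNReal.ofReal_sum_of_nonneg (fun I' _ =>
      mul_nonneg (hanonneg I I') ENNReal.toReal_nonneg)]
    refine Finset.sum_congr rfl fun I' _ => ?_
    rw [ENNReal.ofReal_mul (hanonneg I I'), ENNReal.ofReal_toReal (hfin I I')]
  have hT : ∫⁻ x, ((‖G x‖₊ : ℝ≥0∞)) ^ (2:ℝ) ≤ ENNReal.ofReal (K * α) := by
    rw [hlint2]
    apply ENNReal.ofReal_le_ofReal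
    rw [hK]
    exact lemmaT hd hα S c hc hsum 𝒥 h3 h4 t ht2
  -- conclude
  have hKα : 0 < K * α := mul_pos hKpos hα
  calc eLpNorm G 2 volume
      = (∫⁻ x, ((‖G x‖₊ : ℝ≥0∞)) ^ (2:ℝ)) ^ ((1:ℝ)/2) := by
        rw [eLpNorm_eq_lintegral_rpow_enorm_toReal (by norm_num) (by norm_num)]
        norm_num
        rfl
    _ ≤ (ENNReal.ofReal (K * α)) ^ ((1:ℝ)/2) := ENNReal.rpow_le_rpow hT (by norm_num)
    _ = ENNReal.ofReal ((K * α) ^ ((1:ℝ)/2)) := ENNReal.ofReal_rpow_of_pos hKα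
    _ = ENNReal.ofReal (Real.sqrt K * Real.sqrt α) := by
        rw [← Real.sqrt_eq_rpow, Real.sqrt_mul hKpos.le]
end
end
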